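/- arXiv:1410.6754 — 2 statements merged into one kernel-verified Lean document; each statement's English description precedes it below -/
import Mathlib

section
/- Let s₁,…,s_m be bucket sizes (natural numbers, m ≥ 1) and let r ≥ 1. Let L* be the minimum, over all partitions of the buckets into at most r consecutive groups, of the maximum total size of a group. Then for every bound L with L ≥ max_i sᵢ, the scanning algorithm succeeds for bound L and group count r if and only if L ≥ L*. In particular, binary search over L combined with the scanning algorithm finds the optimal bound L*. -/
/-- The length of the longest prefix of `s` whose sum is at most `L`. -/
def greedyLen (L : ℕ) (s : List ℕ) : ℕ :=
  ((List.range (s.length + 1)).filter (fun j => (s.take j).sum ≤ L)).foldr max 0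

/-- The scanning (greedy) algorithm: repeatedly take as the next group the longest
prefix of the remaining buckets whose total size is at most `L`. -/
def scanGroups (L : ℕ) : List ℕ → List (List ℕ)
  | [] => []
  | a :: t =>
      (a :: t).take (max 1 (greedyLen L (a :: t))) ::
        scanGroups L ((a :: t).drop (max 1 (greedyLen L (a :: t))))
  termination_by s => s.length
  decreasing_by
    simp only [List.length_drop, List.length_cons]
    omega

theorem le_foldr_max {x : ℕ} {l : List ℕ} (h : x ∈ l) : x ≤ l.foldr max 0 := by
  induction l with
  | nil => cases h
  | cons a t ih =>
    rcases List.mem_cons.1 h with rfl | h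
    · exact le_max_left _ _
    · exact le_trans (ih h) (le_max_right _ _)

theorem foldr_max_le {L : ℕ} {l : List ℕ} (h : ∀ x ∈ l, x ≤ L) : l.foldr max 0 ≤ L := by
  induction l with
  | nil => exact Nat.zero_le _
  | cons a t ih =>
    exact max_le (h a (by simp)) (ih fun x hx => h x (by simp [hx]))

theorem foldr_max_mem (l : List ℕ) : l.foldr max 0 ∈ l ∨ l.foldr max 0 = 0 := by
  induction l with
  | nil => right; rfl
  | cons a t ih =>
    rcases le_or_gt (t.foldr max 0) a with h | h
    · left; simp [List.foldr, max_eq_left h]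
    · have heq : (a :: t).foldr max 0 = t.foldr max 0 := by
        simp [List.foldr, max_eq_right h.le]
      rw [heq]
      rcases ih with h' | h'
      · left; simp [h']
      · right; exact h'

theorem greedy_sum_le (L : ℕ) (s : List ℕ) : (s.take (greedyLen L s)).sum ≤ L := by
  rcases foldr_max_mem ((List.range (s.length + 1)).filter (fun j => (s.take j).sum ≤ L))
    with h | h
  · have := List.mem_filter.1 h
    simpa [greedyLen] using this.2
  · simp [greedyLen] at h ⊢
    simp [h]

theorem greedyLen_ge {L : ℕ} {s : List ℕ} {j : ℕ} (h1 : j ≤ s.length)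
    (h2 : (s.take j).sum ≤ L) : j ≤ greedyLen L s := by
  apply le_foldr_max
  exact List.mem_filter.2 ⟨List.mem_range.2 (by omega), by simpa using h2⟩

theorem scan_props (L n : ℕ) : ∀ s : List ℕ, s.length ≤ n → (∀ x ∈ s, x ≤ L) →
    (scanGroups L s).flatten = s ∧ (∀ g ∈ scanGroups L s, g ≠ [] ∧ g.sum ≤ L) := by
  induction n with
  | zero =>
    intro s hs _
    have : s = [] := List.eq_nil_of_length_eq_zero (Nat.le_zero.1 hs)
    subst this; simp [scanGroups]
  | succ n ih =>
    intro s hs hL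
    match s with
    | [] => simp [scanGroups]
    | a :: t =>
      have hgl : 1 ≤ greedyLen L (a :: t) := by
        apply greedyLen_ge (by simp)
        simpa using hL a (by simp)
      have hkeq : max 1 (greedyLen L (a :: t)) = greedyLen L (a :: t) := max_eq_right hgl
      set k := max 1 (greedyLen L (a :: t)) with hk
      have hk1 : 1 ≤ k := le_max_left _ _
      have hdrop_len : ((a :: t).drop k).length ≤ n := by
        simp only [List.length_drop, List.length_cons] at *
        omega
      have hdropL : ∀ x ∈ (a :: t).drop k, x ≤ L := fun x hx =>
        hL x (List.mem_of_mem_drop hx)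
      obtain ⟨h1, h2⟩ := ih _ hdrop_len hdropL
      rw [scanGroups]
      constructor
      · rw [← hk, List.flatten_cons, h1, List.take_append_drop]
      · intro g hg
        rcases List.mem_cons.1 hg with rfl | hg
        · constructor
          · apply List.ne_nil_of_length_pos
            simp only [List.length_take, List.length_cons]
            omega
          · rw [max_eq_right hgl]; exact greedy_sum_le L (a :: t)
        · exact h2 g hg

/-- Drop `d` leading elements from a consecutive partition. -/
def dropPart : List (List ℕ) → ℕ → List (List ℕ)
  | [], _ => []
  | g :: P, d => if g.length ≤ d then dropPart P (d - g.length) else (g.drop d) :: P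

theorem dropPart_spec (L : ℕ) : ∀ P : List (List ℕ), ∀ d : ℕ,
    (∀ g ∈ P, g ≠ []) → (∀ g ∈ P, g.sum ≤ L) →
    (dropPart P d).flatten = P.flatten.drop d ∧ (dropPart P d).length ≤ P.length ∧
    (∀ g ∈ dropPart P d, g ≠ []) ∧ (∀ g ∈ dropPart P d, g.sum ≤ L) := by
  intro P
  induction P with
  | nil => intro d _ _; simp [dropPart]
  | cons g P ih =>
    intro d hne hsum
    by_cases h : g.length ≤ d
    · obtain ⟨a1, a2, a3, a4⟩ := ih (d - g.length)
        (fun x hx => hne x (by simp [hx])) (fun x hx => hsum x (by simp [hx]))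
      rw [dropPart, if_pos h]
      refine ⟨?_, ?_, a3, a4⟩
      · rw [a1]
        simp [List.drop_append, List.drop_eq_nil_of_le h]
      · exact a2.trans (by simp)
    · rw [dropPart, if_neg h]
      push_neg at h
      refine ⟨?_, by simp, ?_, ?_⟩
      · simp [List.drop_append, Nat.sub_eq_zero_of_le h.le]
      · intro x hx
        rcases List.mem_cons.1 hx with rfl | hx
        · apply List.ne_nil_of_length_pos
          simp only [List.length_drop]
          omega
        · exact hne x (by simp [hx])
      · intro x hx
        rcases List.mem_cons.1 hx with rfl | hx
        · have hsplit := List.sum_take_add_sum_drop g d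
          have := hsum g (by simp)
          omega
        · exact hsum x (by simp [hx])

theorem scan_min (L n : ℕ) : ∀ s : List ℕ, s.length ≤ n →
    ∀ P : List (List ℕ), P.flatten = s → (∀ g ∈ P, g ≠ []) → (∀ g ∈ P, g.sum ≤ L) →
    (scanGroups L s).length ≤ P.length := by
  induction n with
  | zero =>
    intro s hs P _ _ _
    have : s = [] := List.eq_nil_of_length_eq_zero (Nat.le_zero.1 hs)
    subst this; simp [scanGroups]
  | succ n ih =>
    intro s hs P hflat hne hsum
    match s, P with
    | [], _ => simp [scanGroups]
    | a :: t, [] => simp at hflat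
    | a :: t, g :: P' =>
      have hgne : g ≠ [] := hne g (by simp)
      have hglen : 1 ≤ g.length := List.length_pos_iff.2 hgne
      have hflat' : g ++ P'.flatten = a :: t := by simpa using hflat
      have hpre : (a :: t).take g.length = g := by
        rw [← hflat']; exact List.take_left
      have hglen_le : g.length ≤ (a :: t).length := by
        rw [← hflat']; simp
      have hge : g.length ≤ greedyLen L (a :: t) := by
        apply greedyLen_ge hglen_le
        rw [hpre]; exact hsum g (by simp)
      have hk1 : 1 ≤ max 1 (greedyLen L (a :: t)) := le_max_left _ _
      have hkg : g.length ≤ max 1 (greedyLen L (a :: t)) := le_trans hge (le_max_right _ _)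
      set k := max 1 (greedyLen L (a :: t)) with hk
      have hdrop : (a :: t).drop k = P'.flatten.drop (k - g.length) := by
        rw [← hflat', List.drop_append,
          List.drop_eq_nil_of_le hkg, List.nil_append]
      obtain ⟨q1, q2, q3, q4⟩ := dropPart_spec L P' (k - g.length)
        (fun x hx => hne x (by simp [hx])) (fun x hx => hsum x (by simp [hx]))
      have hdl : ((a :: t).drop k).length ≤ n := by
        simp only [List.length_drop, List.length_cons] at *
        omega
      have hrec := ih _ hdl (dropPart P' (k - g.length)) (by rw [q1, hdrop]) q3 q4
      rw [scanGroups]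
      simp only [List.length_cons]
      exact Nat.succ_le_succ (le_trans hrec q2)

/-- For bucket sizes `s` (at least one bucket) and `r ≥ 1` groups, let `Lstar` be the
minimum, over all partitions of the buckets into at most `r` consecutive (nonempty)
groups, of the maximum total size of a group.  Then for every bound `L` that is at
least as large as every bucket, the scanning algorithm succeeds with at most `r`
groups iff `Lstar ≤ L`. -/
theorem scanning_succeeds_iff_ge_optimum
    (s : List ℕ) (hm : 1 ≤ s.length) (r : ℕ) (hr : 1 ≤ r)
    (Lstar : ℕ)
    (hLstar : IsLeast {M : ℕ | ∃ P : List (List ℕ),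
        P.flatten = s ∧ P.length ≤ r ∧ (∀ g ∈ P, g ≠ []) ∧
        (P.map List.sum).foldr max 0 = M} Lstar)
    (L : ℕ) (hL : ∀ x ∈ s, x ≤ L) :
    (scanGroups L s).length ≤ r ↔ Lstar ≤ L := by
  obtain ⟨h1, h2⟩ := scan_props L s.length s le_rfl hL
  constructor
  · intro hlen
    have hmem : ((scanGroups L s).map List.sum).foldr max 0 ∈
        {M : ℕ | ∃ P : List (List ℕ), P.flatten = s ∧ P.length ≤ r ∧
          (∀ g ∈ P, g ≠ []) ∧ (P.map List.sum).foldr max 0 = M} :=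
      ⟨scanGroups L s, h1, hlen, fun g hg => (h2 g hg).1, rfl⟩
    have hle : ((scanGroups L s).map List.sum).foldr max 0 ≤ L := by
      apply foldr_max_le
      intro x hx
      obtain ⟨g, hg, rfl⟩ := List.mem_map.1 hx
      exact (h2 g hg).2
    exact le_trans (hLstar.2 hmem) hle
  · intro hLs
    obtain ⟨P, hPf, hPr, hPne, hPmax⟩ := hLstar.1
    have hPsum : ∀ g ∈ P, g.sum ≤ L := by
      intro g hg
      have : g.sum ≤ Lstar := by
        rw [← hPmax]
        exact le_foldr_max (List.mem_map.2 ⟨g, hg, rfl⟩)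
      omega
    exact le_trans (scan_min L s.length s le_rfl P hPf hPne hPsum) hPr
end

section
/- Let p, r be positive integers with r dividing p and let a > 0. (i) If the positions of one part are partitioned into at most p·(1 + 1/a) consecutive pieces and into p/r consecutive blocks (one per receiving PE), then the total number of (piece, block) incidences — i.e., messages for this part — is at most p·(1 + 1/r + 1/a). (ii) If moreover every piece occupies at most s consecutive positions and every block contains at least s positions, then every piece intersects at most 2 blocks, so a PE holding at most r·(1 + 1/a) pieces sends at most 2·r·(1 + 1/a) messages. -/
/-- Let `r ∣ p` and `a > 0`.  The positions `{0,…,N−1}` of one part are partitioned into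
`m ≤ p·(1 + 1/a)` consecutive nonempty pieces (monotone surjective `piece`) and into
`p/r` consecutive nonempty blocks (monotone surjective `block`, one per receiving PE).

(i) The number of (piece, block) incidences — i.e. messages for this part — is at most
`p·(1 + 1/r + 1/a)`.

(ii) If moreover every piece occupies at most `s` positions and every block contains at
least `s` positions, then every piece intersects at most `2` blocks, and hence a PE
holding any set `P` of at most `r·(1 + 1/a)` pieces sends at most `2·r·(1 + 1/a)`
messages. -/
theorem data_delivery_message_bounds
    (p r : ℕ) (hp : 0 < p) (hr : 0 < r) (hdvd : r ∣ p)
    (a : ℝ) (ha : 0 < a)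
    (N m : ℕ) (piece : ℕ → Fin m) (block : ℕ → Fin (p / r))
    (hpm : MonotoneOn piece (Set.Iio N)) (hbm : MonotoneOn block (Set.Iio N))
    (hps : ∀ i : Fin m, ∃ x < N, piece x = i)
    (hbs : ∀ j : Fin (p / r), ∃ x < N, block x = j)
    (hm : (m : ℝ) ≤ (p : ℝ) * (1 + 1 / a)) :
    ((((Finset.range N).image (fun x => (piece x, block x))).card : ℝ)
        ≤ (p : ℝ) * (1 + 1 / (r : ℝ) + 1 / a)) ∧
    ∀ s : ℕ,
      (∀ i : Fin m, ((Finset.range N).filter (fun x => piece x = i)).card ≤ s) →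
      (∀ j : Fin (p / r), s ≤ ((Finset.range N).filter (fun x => block x = j)).card) →
      (∀ i : Fin m,
          (((Finset.range N).filter (fun x => piece x = i)).image block).card ≤ 2) ∧
      ∀ P : Finset (Fin m), (P.card : ℝ) ≤ (r : ℝ) * (1 + 1 / a) →
        (((((Finset.range N).filter (fun x => piece x ∈ P)).image
            (fun x => (piece x, block x))).card : ℝ)
          ≤ 2 * (r : ℝ) * (1 + 1 / a)) := by
  have hrR : (0:ℝ) < (r:ℝ) := by exact_mod_cast hr
  have hqcast : ((p / r : ℕ) : ℝ) = (p : ℝ) / (r : ℝ) :=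
    Nat.cast_div hdvd hrR.ne'
  constructor
  · -- part (i)
    have key : ∀ x ∈ Finset.range N, ∀ y ∈ Finset.range N, x ≤ y →
        (piece x).1 + (block x).1 = (piece y).1 + (block y).1 →
        (piece x, block x) = (piece y, block y) := by
      intro x hx y hy hxy hsum
      simp only [Finset.mem_range] at hx hy
      have h1 : (piece x).1 ≤ (piece y).1 := hpm hx hy hxy
      have h2 : (block x).1 ≤ (block y).1 := hbm hx hy hxy
      have e1 : (piece x).1 = (piece y).1 := by omega
      have e2 : (block x).1 = (block y).1 := by omega
      exact Prod.ext (Fin.ext e1) (Fin.ext e2)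
    have hcard : (((Finset.range N).image (fun x => (piece x, block x))).card)
        ≤ m + p / r := by
      have := Finset.card_le_card_of_injOn
        (f := fun z : Fin m × Fin (p / r) => z.1.1 + z.2.1)
        (s := (Finset.range N).image (fun x => (piece x, block x)))
        (t := Finset.range (m + p / r))
        (by
          intro z hz
          rcases Finset.mem_image.mp hz with ⟨x, hx, rfl⟩
          simp only [Finset.mem_coe, Finset.mem_range]
          have := (piece x).2
          have := (block x).2
          omega)
        (by
          intro z1 hz1 z2 hz2 h
          simp only [Finset.coe_image, Set.mem_image, Finset.mem_coe] at hz1 hz2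
          rcases hz1 with ⟨x, hx, rfl⟩
          rcases hz2 with ⟨y, hy, rfl⟩
          rcases le_total x y with hxy | hxy
          · exact key x hx y hy hxy h
          · exact (key y hy x hx hxy h.symm).symm)
      simpa using this
    have : (((Finset.range N).image (fun x => (piece x, block x))).card : ℝ)
        ≤ (m : ℝ) + ((p / r : ℕ) : ℝ) := by exact_mod_cast hcard
    rw [hqcast] at this
    have hpr : (p : ℝ) / (r : ℝ) = (p : ℝ) * (1 / (r : ℝ)) := by ring
    nlinarith [this, hm]
  · intro s hs hb
    have h2 : ∀ i : Fin m,
        (((Finset.range N).filter (fun x => piece x = i)).image block).card ≤ 2 := by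
      intro i
      by_contra hcon
      push_neg at hcon
      set img := ((Finset.range N).filter (fun x => piece x = i)).image block with himg
      have hne : img.Nonempty := Finset.card_pos.mp (by omega)
      set u := img.min' hne with hu
      set w := img.max' hne with hw
      have herase : ((img.erase u).erase w).Nonempty := by
        rw [← Finset.card_pos]
        have h1 := Finset.pred_card_le_card_erase (s := img) (a := u)
        have h2' := Finset.pred_card_le_card_erase (s := img.erase u) (a := w)
        omega
      obtain ⟨v, hv⟩ := herase
      have hvw : v ≠ w := Finset.ne_of_mem_erase hv
      have hvimg : v ∈ img := Finset.mem_of_mem_erase (Finset.mem_of_mem_erase hv)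
      have hvu : v ≠ u := Finset.ne_of_mem_erase (Finset.mem_of_mem_erase hv)
      have huv : u < v := lt_of_le_of_ne (Finset.min'_le _ _ hvimg) (Ne.symm hvu)
      have hvw' : v < w := lt_of_le_of_ne (Finset.le_max' _ _ hvimg) hvw
      -- witnesses
      have humem : u ∈ img := Finset.min'_mem _ _
      have hwmem : w ∈ img := Finset.max'_mem _ _
      rcases Finset.mem_image.mp humem with ⟨xu, hxu, hbu⟩
      rcases Finset.mem_image.mp hwmem with ⟨xw, hxw, hbw⟩
      simp only [Finset.mem_filter, Finset.mem_range] at hxu hxw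
      -- fiber of v is contained in the piece fiber of i
      have hfib : ∀ y ∈ (Finset.range N).filter (fun x => block x = v),
          y ∈ (Finset.range N).filter (fun x => piece x = i) := by
        intro y hy
        simp only [Finset.mem_filter, Finset.mem_range] at hy ⊢
        obtain ⟨hyN, hby⟩ := hy
        refine ⟨hyN, ?_⟩
        have h1 : xu ≤ y := by
          by_contra hcon'
          push_neg at hcon'
          have := hbm (Set.mem_Iio.mpr hyN) (Set.mem_Iio.mpr hxu.1) hcon'.le
          rw [hby, hbu] at this
          exact absurd this (not_le_of_gt huv)
        have h2'' : y ≤ xw := by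
          by_contra hcon'
          push_neg at hcon'
          have := hbm (Set.mem_Iio.mpr hxw.1) (Set.mem_Iio.mpr hyN) hcon'.le
          rw [hby, hbw] at this
          exact absurd this (not_le_of_gt hvw')
        have hp1 : piece xu ≤ piece y := hpm (Set.mem_Iio.mpr hxu.1) (Set.mem_Iio.mpr hyN) h1
        have hp2 : piece y ≤ piece xw := hpm (Set.mem_Iio.mpr hyN) (Set.mem_Iio.mpr hxw.1) h2''
        rw [hxu.2] at hp1
        rw [hxw.2] at hp2
        exact le_antisymm hp2 hp1
      have hxu_notin : xu ∉ (Finset.range N).filter (fun x => block x = v) := by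
        simp only [Finset.mem_filter, Finset.mem_range, not_and]
        intro _
        rw [hbu]
        exact fun h => hvu h.symm
      have hsub : insert xu ((Finset.range N).filter (fun x => block x = v)) ⊆
          (Finset.range N).filter (fun x => piece x = i) := by
        intro y hy
        rcases Finset.mem_insert.mp hy with rfl | hy
        · simp only [Finset.mem_filter, Finset.mem_range]
          exact hxu
        · exact hfib y hy
      have hc1 := Finset.card_le_card hsub
      rw [Finset.card_insert_of_notMem hxu_notin] at hc1
      have hc2 := hb v
      have hc3 := hs i
      omega
    refine ⟨h2, ?_⟩
    intro P hP
    have hsub : (((Finset.range N).filter (fun x => piece x ∈ P)).image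
        (fun x => (piece x, block x))) ⊆
        P.biUnion (fun i => (((Finset.range N).filter (fun x => piece x = i)).image
          block).image (fun j => (i, j))) := by
      intro z hz
      rcases Finset.mem_image.mp hz with ⟨x, hx, rfl⟩
      simp only [Finset.mem_filter, Finset.mem_range] at hx
      apply Finset.mem_biUnion.mpr
      refine ⟨piece x, hx.2, ?_⟩
      apply Finset.mem_image.mpr
      refine ⟨block x, ?_, rfl⟩
      apply Finset.mem_image.mpr
      exact ⟨x, by simp [hx.1], rfl⟩
    have hcard : ((((Finset.range N).filter (fun x => piece x ∈ P)).image
        (fun x => (piece x, block x))).card) ≤ 2 * P.card := by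
      calc _ ≤ _ := Finset.card_le_card hsub
        _ ≤ ∑ i ∈ P, ((((Finset.range N).filter (fun x => piece x = i)).image
              block).image (fun j => (i, j))).card := Finset.card_biUnion_le
        _ ≤ ∑ i ∈ P, 2 := by
            apply Finset.sum_le_sum
            intro i hi
            exact le_trans Finset.card_image_le (h2 i)
        _ = 2 * P.card := by rw [Finset.sum_const, smul_eq_mul, mul_comm]
    have : ((((Finset.range N).filter (fun x => piece x ∈ P)).image
        (fun x => (piece x, block x))).card : ℝ) ≤ 2 * (P.card : ℝ) := by
      exact_mod_cast hcard
    nlinarith [this, hP]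
end
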